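/- Let $S \subseteq [n]^3$ be a slice-increasing set with $|S| = \alpha n$ where $\alpha \geq 3$. Then the number of pairs of distinct points $p, q \in S$ with $q - p$ having all three coordinates strictly positive (K-edges) is at least $\frac{1}{64}(\alpha - 1)(\alpha - 3)^2 n$. -/

import Mathlib

def SliceIncZ (S : Finset (ℤ × ℤ × ℤ)) : Prop :=
  ∀ p ∈ S, ∀ q ∈ S, p ≠ q →
    (p.1 < q.1 ∧ p.2.1 < q.2.1) ∨ (p.1 < q.1 ∧ p.2.2 < q.2.2) ∨
    (p.2.1 < q.2.1 ∧ p.2.2 < q.2.2) ∨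
    (q.1 < p.1 ∧ q.2.1 < p.2.1) ∨ (q.1 < p.1 ∧ q.2.2 < p.2.2) ∨
    (q.2.1 < p.2.1 ∧ q.2.2 < p.2.2)

def InCube (n : ℕ) (S : Finset (ℤ × ℤ × ℤ)) : Prop :=
  ∀ p ∈ S, (1 ≤ p.1 ∧ p.1 ≤ n) ∧ (1 ≤ p.2.1 ∧ p.2.1 ≤ n) ∧ (1 ≤ p.2.2 ∧ p.2.2 ≤ n)

namespace Stmt15Aux

abbrev Pt := ℤ × ℤ × ℤ

/-- number of points strictly above `p` in the x-slice of `p` -/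
def ux (S : Finset Pt) (p : Pt) : ℕ :=
  (S.filter (fun q => q.1 = p.1 ∧ p.2.1 < q.2.1 ∧ p.2.2 < q.2.2)).card

/-- number of points strictly below `p` in the y-slice of `p` -/
def ry (S : Finset Pt) (p : Pt) : ℕ :=
  (S.filter (fun r => r.2.1 = p.2.1 ∧ r.1 < p.1 ∧ r.2.2 < p.2.2)).card

lemma uniq {S : Finset Pt} (hS : SliceIncZ S) {p q : Pt} (hp : p ∈ S) (hq : q ∈ S)
    (h1 : p.1 = q.1) (h2 : p.2.1 = q.2.1) : p = q := by
  by_contra h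
  rcases hS p hp q hq h with ⟨a, b⟩ | ⟨a, b⟩ | ⟨a, b⟩ | ⟨a, b⟩ | ⟨a, b⟩ | ⟨a, b⟩ <;> omega

lemma compx {S : Finset Pt} (hS : SliceIncZ S) {p q : Pt} (hp : p ∈ S) (hq : q ∈ S)
    (hx : p.1 = q.1) (hy : p.2.1 < q.2.1) : p.2.2 < q.2.2 := by
  have hne : p ≠ q := by intro h; rw [h] at hy; exact lt_irrefl _ hy
  rcases hS p hp q hq hne with ⟨a, b⟩ | ⟨a, b⟩ | ⟨a, b⟩ | ⟨a, b⟩ | ⟨a, b⟩ | ⟨a, b⟩ <;> omega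

lemma compy {S : Finset Pt} (hS : SliceIncZ S) {p q : Pt} (hp : p ∈ S) (hq : q ∈ S)
    (hy : p.2.1 = q.2.1) (hx : q.1 < p.1) : q.2.2 < p.2.2 := by
  have hne : p ≠ q := by intro h; rw [h] at hx; exact lt_irrefl _ hx
  rcases hS p hp q hq hne with ⟨a, b⟩ | ⟨a, b⟩ | ⟨a, b⟩ | ⟨a, b⟩ | ⟨a, b⟩ | ⟨a, b⟩ <;> omega

/-- In a finset on which `f` is injective, at most `k` elements have
fewer than `k` elements above them. -/
lemma count_lemma {β : Type*} [DecidableEq β] (T : Finset β) (f : β → ℤ)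
    (hf : Set.InjOn f T) (k : ℕ) :
    T.card ≤ k + (T.filter (fun p => k ≤ (T.filter (fun q => f p < f q)).card)).card := by
  classical
  set g : β → ℕ := fun p => (T.filter (fun q => f p < f q)).card with hg
  have key : ∀ p ∈ T, ∀ p' ∈ T, f p < f p' → g p' < g p := by
    intro p hp p' hp' hlt
    apply Finset.card_lt_card
    constructor
    · intro q hq
      rw [Finset.mem_filter] at hq ⊢
      exact ⟨hq.1, lt_trans hlt hq.2⟩
    · intro hsub
      have : p' ∈ T.filter (fun q => f p' < f q) := hsub (by
        rw [Finset.mem_filter]; exact ⟨hp', hlt⟩)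
      rw [Finset.mem_filter] at this
      exact lt_irrefl _ this.2
  have hinj : Set.InjOn g (T.filter (fun p => g p < k)) := by
    intro p hp p' hp' hgp
    rw [Finset.coe_filter, Set.mem_setOf_eq] at hp hp'
    by_contra hne
    have hff : f p ≠ f p' := fun h => hne (hf hp.1 hp'.1 h)
    rcases lt_or_gt_of_ne hff with h | h
    · exact absurd hgp (by have := key p hp.1 p' hp'.1 h; omega)
    · exact absurd hgp (by have := key p' hp'.1 p hp.1 h; omega)
  have hbad : (T.filter (fun p => g p < k)).card ≤ k := by
    have h := Finset.card_le_card_of_injOn g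
      (by intro a ha; rw [Finset.mem_coe, Finset.mem_filter] at ha; exact Finset.mem_coe.mpr (Finset.mem_range.mpr ha.2)) hinj
    simpa using h
  have hsplit := Finset.card_filter_add_card_filter_not
    (s := T) (p := fun p => k ≤ g p)
  have hneg : T.filter (fun p => ¬ k ≤ g p) = T.filter (fun p => g p < k) := by
    apply Finset.filter_congr; intro x _; omega
  rw [hneg] at hsplit
  show T.card ≤ k + (T.filter (fun p => k ≤ g p)).card
  omega

lemma card_X_le {n : ℕ} {S : Finset Pt} (_hSn : InCube n S) (f : Pt → ℤ)
    (hrange : ∀ p ∈ S, 1 ≤ f p ∧ f p ≤ n) : (S.image f).card ≤ n := by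
  have hsub : S.image f ⊆ Finset.Icc (1 : ℤ) n := by
    intro c hc
    rw [Finset.mem_image] at hc
    obtain ⟨p, hp, rfl⟩ := hc
    rw [Finset.mem_Icc]
    exact hrange p hp
  calc (S.image f).card ≤ (Finset.Icc (1 : ℤ) n).card := Finset.card_le_card hsub
    _ = n := by rw [Int.card_Icc]; omega

lemma ux_count {n : ℕ} {S : Finset Pt} (hS : SliceIncZ S) (hSn : InCube n S) (k : ℕ) :
    S.card ≤ k * n + (S.filter (fun p => k ≤ ux S p)).card := by
  classical
  set X := S.image (fun p => p.1) with hX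
  have hXcard : X.card ≤ n := card_X_le hSn _ (fun p hp => (hSn p hp).1)
  have hfib : S.card = ∑ c ∈ X, (S.filter (fun p => p.1 = c)).card :=
    Finset.card_eq_sum_card_fiberwise (fun p hp => Finset.mem_image_of_mem _ hp)
  have hfib2 : (S.filter (fun p => k ≤ ux S p)).card
      = ∑ c ∈ X, ((S.filter (fun p => k ≤ ux S p)).filter (fun p => p.1 = c)).card :=
    Finset.card_eq_sum_card_fiberwise
      (fun p hp => Finset.mem_image_of_mem _ (Finset.mem_of_mem_filter p hp))
  have hper : ∀ c ∈ X, (S.filter (fun p => p.1 = c)).card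
      ≤ k + ((S.filter (fun p => k ≤ ux S p)).filter (fun p => p.1 = c)).card := by
    intro c _
    set T := S.filter (fun p => p.1 = c) with hT
    have hmemT : ∀ p, p ∈ T ↔ p ∈ S ∧ p.1 = c := by
      intro p; rw [hT, Finset.mem_filter]
    have hfInj : Set.InjOn (fun p : Pt => p.2.1) T := by
      intro p hp p' hp' h
      rw [Finset.mem_coe, hmemT] at hp hp'
      exact uniq hS hp.1 hp'.1 (by rw [hp.2, hp'.2]) h
    have hcl := count_lemma T (fun p => p.2.1) hfInj k
    have hcount : ∀ p ∈ T, (T.filter (fun q => p.2.1 < q.2.1)).card = ux S p := by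
      intro p hp
      rw [hmemT] at hp
      unfold ux
      congr 1
      ext q
      rw [Finset.mem_filter, hmemT, Finset.mem_filter]
      constructor
      · rintro ⟨⟨hqS, hqc⟩, hlt⟩
        have hx : p.1 = q.1 := by rw [hp.2, hqc]
        exact ⟨hqS, hx.symm, hlt, compx hS hp.1 hqS hx hlt⟩
      · rintro ⟨hqS, hqx, hlt, _⟩
        exact ⟨⟨hqS, by rw [hqx, hp.2]⟩, hlt⟩
    have heq : T.filter (fun p => k ≤ (T.filter (fun q => p.2.1 < q.2.1)).card)
        = (S.filter (fun p => k ≤ ux S p)).filter (fun p => p.1 = c) := by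
      apply Finset.Subset.antisymm
      · intro p hp
        rw [Finset.mem_filter] at hp
        obtain ⟨hpT, hk⟩ := hp
        obtain ⟨hpS, hpc⟩ := (hmemT p).mp hpT
        rw [hcount p hpT] at hk
        rw [Finset.mem_filter, Finset.mem_filter]
        exact ⟨⟨hpS, hk⟩, hpc⟩
      · intro p hp
        rw [Finset.mem_filter, Finset.mem_filter] at hp
        obtain ⟨⟨hpS, hk⟩, hpc⟩ := hp
        have hpT : p ∈ T := (hmemT p).mpr ⟨hpS, hpc⟩
        rw [Finset.mem_filter]
        exact ⟨hpT, by rw [hcount p hpT]; exact hk⟩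
    rw [heq] at hcl
    exact hcl
  calc S.card = ∑ c ∈ X, (S.filter (fun p => p.1 = c)).card := hfib
    _ ≤ ∑ c ∈ X, (k + ((S.filter (fun p => k ≤ ux S p)).filter (fun p => p.1 = c)).card) :=
        Finset.sum_le_sum hper
    _ = k * X.card + (S.filter (fun p => k ≤ ux S p)).card := by
        rw [Finset.sum_add_distrib, Finset.sum_const, smul_eq_mul, mul_comm, ← hfib2]
    _ ≤ k * n + (S.filter (fun p => k ≤ ux S p)).card := by
        have := Nat.mul_le_mul_left k hXcard; omega

lemma ry_count {n : ℕ} {S : Finset Pt} (hS : SliceIncZ S) (hSn : InCube n S) (k : ℕ) :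
    S.card ≤ k * n + (S.filter (fun p => k ≤ ry S p)).card := by
  classical
  set X := S.image (fun p => p.2.1) with hX
  have hXcard : X.card ≤ n := card_X_le hSn _ (fun p hp => (hSn p hp).2.1)
  have hfib : S.card = ∑ c ∈ X, (S.filter (fun p => p.2.1 = c)).card :=
    Finset.card_eq_sum_card_fiberwise (fun p hp => Finset.mem_image_of_mem _ hp)
  have hfib2 : (S.filter (fun p => k ≤ ry S p)).card
      = ∑ c ∈ X, ((S.filter (fun p => k ≤ ry S p)).filter (fun p => p.2.1 = c)).card :=
    Finset.card_eq_sum_card_fiberwise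
      (fun p hp => Finset.mem_image_of_mem _ (Finset.mem_of_mem_filter p hp))
  have hper : ∀ c ∈ X, (S.filter (fun p => p.2.1 = c)).card
      ≤ k + ((S.filter (fun p => k ≤ ry S p)).filter (fun p => p.2.1 = c)).card := by
    intro c _
    set T := S.filter (fun p => p.2.1 = c) with hT
    have hmemT : ∀ p, p ∈ T ↔ p ∈ S ∧ p.2.1 = c := by
      intro p; rw [hT, Finset.mem_filter]
    have hfInj : Set.InjOn (fun p : Pt => -p.1) T := by
      intro p hp p' hp' h
      rw [Finset.mem_coe, hmemT] at hp hp'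
      exact uniq hS hp.1 hp'.1 (by simp only at h; omega) (by rw [hp.2, hp'.2])
    have hcl := count_lemma T (fun p => -p.1) hfInj k
    have hcount : ∀ p ∈ T, (T.filter (fun q => -p.1 < -q.1)).card = ry S p := by
      intro p hp
      rw [hmemT] at hp
      unfold ry
      congr 1
      ext q
      rw [Finset.mem_filter, hmemT, Finset.mem_filter]
      constructor
      · rintro ⟨⟨hqS, hqc⟩, hlt⟩
        have hy : p.2.1 = q.2.1 := by rw [hp.2, hqc]
        have hx : q.1 < p.1 := by omega
        exact ⟨hqS, hy.symm, hx, compy hS hp.1 hqS hy hx⟩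
      · rintro ⟨hqS, hqy, hlt, _⟩
        exact ⟨⟨hqS, by rw [hqy, hp.2]⟩, by omega⟩
    have heq : T.filter (fun p => k ≤ (T.filter (fun q => -p.1 < -q.1)).card)
        = (S.filter (fun p => k ≤ ry S p)).filter (fun p => p.2.1 = c) := by
      apply Finset.Subset.antisymm
      · intro p hp
        rw [Finset.mem_filter] at hp
        obtain ⟨hpT, hk⟩ := hp
        obtain ⟨hpS, hpc⟩ := (hmemT p).mp hpT
        rw [hcount p hpT] at hk
        rw [Finset.mem_filter, Finset.mem_filter]
        exact ⟨⟨hpS, hk⟩, hpc⟩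
      · intro p hp
        rw [Finset.mem_filter, Finset.mem_filter] at hp
        obtain ⟨⟨hpS, hk⟩, hpc⟩ := hp
        have hpT : p ∈ T := (hmemT p).mpr ⟨hpS, hpc⟩
        rw [Finset.mem_filter]
        exact ⟨hpT, by rw [hcount p hpT]; exact hk⟩
    rw [heq] at hcl
    exact hcl
  calc S.card = ∑ c ∈ X, (S.filter (fun p => p.2.1 = c)).card := hfib
    _ ≤ ∑ c ∈ X, (k + ((S.filter (fun p => k ≤ ry S p)).filter (fun p => p.2.1 = c)).card) :=
        Finset.sum_le_sum hper
    _ = k * X.card + (S.filter (fun p => k ≤ ry S p)).card := by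
        rw [Finset.sum_add_distrib, Finset.sum_const, smul_eq_mul, mul_comm, ← hfib2]
    _ ≤ k * n + (S.filter (fun p => k ≤ ry S p)).card := by
        have := Nat.mul_le_mul_left k hXcard; omega

lemma edges {S : Finset Pt} (hS : SliceIncZ S) :
    ∑ p ∈ S, ry S p * ux S p ≤
      ((S ×ˢ S).filter fun pq =>
        pq.1.1 < pq.2.1 ∧ pq.1.2.1 < pq.2.2.1 ∧ pq.1.2.2 < pq.2.2.2).card := by
  classical
  set F : Pt → Finset (Pt × Pt) := fun p =>
    (S.filter (fun r => r.2.1 = p.2.1 ∧ r.1 < p.1 ∧ r.2.2 < p.2.2)) ×ˢ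
    (S.filter (fun q => q.1 = p.1 ∧ p.2.1 < q.2.1 ∧ p.2.2 < q.2.2)) with hF
  have hcardF : ∀ p, (F p).card = ry S p * ux S p := by
    intro p; rw [hF]; simp [Finset.card_product, ry, ux]
  have hdisj : ∀ p ∈ S, ∀ p' ∈ S, p ≠ p' → Disjoint (F p) (F p') := by
    intro p hp p' hp' hne
    rw [Finset.disjoint_left]
    intro z hz hz'
    rw [hF, Finset.mem_product, Finset.mem_filter, Finset.mem_filter] at hz hz'
    exact hne (uniq hS hp hp'
      (by rw [← hz.2.2.1, ← hz'.2.2.1]) (by rw [← hz.1.2.1, ← hz'.1.2.1]))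
  have hsub : S.biUnion F ⊆ (S ×ˢ S).filter fun pq =>
      pq.1.1 < pq.2.1 ∧ pq.1.2.1 < pq.2.2.1 ∧ pq.1.2.2 < pq.2.2.2 := by
    intro z hz
    rw [Finset.mem_biUnion] at hz
    obtain ⟨p, _, hzp⟩ := hz
    rw [hF, Finset.mem_product, Finset.mem_filter, Finset.mem_filter] at hzp
    rw [Finset.mem_filter, Finset.mem_product]
    obtain ⟨⟨h1S, h1y, h1x, h1z⟩, ⟨h2S, h2x, h2y, h2z⟩⟩ := hzp
    exact ⟨⟨h1S, h2S⟩, by omega, by omega, by omega⟩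
  calc ∑ p ∈ S, ry S p * ux S p = ∑ p ∈ S, (F p).card := by
        apply Finset.sum_congr rfl; intro p _; exact (hcardF p).symm
    _ = (S.biUnion F).card := (Finset.card_biUnion hdisj).symm
    _ ≤ _ := Finset.card_le_card hsub

end Stmt15Aux

open Stmt15Aux in
theorem stmt_15 (n : ℕ) (S : Finset (ℤ × ℤ × ℤ)) (α : ℝ)
    (hSn : InCube n S) (hS : SliceIncZ S)
    (hcard : (S.card : ℝ) = α * n) (hα : 3 ≤ α) :
    (1 / 64) * (α - 1) * (α - 3) ^ 2 * n ≤
      (((S ×ˢ S).filter fun pq =>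
        pq.1.1 < pq.2.1 ∧ pq.1.2.1 < pq.2.2.1 ∧ pq.1.2.2 < pq.2.2.2).card : ℝ) := by
  classical
  set k₁ : ℕ := ⌈(α - 1) / 2⌉₊ with hk₁
  set k₂ : ℕ := ⌈(α - 3) / 4⌉₊ with hk₂
  have h1 := ux_count hS hSn k₁
  have h2 := ry_count hS hSn k₂
  set A := S.filter (fun p => k₁ ≤ ux S p) with hA
  set B := S.filter (fun p => k₂ ≤ ry S p) with hB
  set C := S.filter (fun p => k₁ ≤ ux S p ∧ k₂ ≤ ry S p) with hC
  have h3 : A.card + B.card ≤ S.card + C.card := by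
    have hinter : C = A ∩ B := by rw [hA, hB, hC, ← Finset.filter_and]
    have hunion : A ∪ B ⊆ S := by
      apply Finset.union_subset <;> exact Finset.filter_subset _ _
    have hiu := Finset.card_inter_add_card_union A B
    have hu : (A ∪ B).card ≤ S.card := Finset.card_le_card hunion
    have hcc : C.card = (A ∩ B).card := by rw [hinter]
    omega
  have h4 : k₁ * k₂ * C.card ≤ ∑ p ∈ S, ry S p * ux S p := by
    calc k₁ * k₂ * C.card = ∑ _p ∈ C, k₁ * k₂ := by
          rw [Finset.sum_const, smul_eq_mul, mul_comm]
      _ ≤ ∑ p ∈ C, ry S p * ux S p := by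
          apply Finset.sum_le_sum
          intro p hp
          rw [hC, Finset.mem_filter] at hp
          calc k₁ * k₂ = k₂ * k₁ := Nat.mul_comm _ _
            _ ≤ ry S p * ux S p := Nat.mul_le_mul hp.2.2 hp.2.1
      _ ≤ ∑ p ∈ S, ry S p * ux S p := by
          apply Finset.sum_le_sum_of_subset (by rw [hC]; exact Finset.filter_subset _ _)
  have h5 := edges hS
  -- pass to reals
  have hE : (k₁ : ℝ) * k₂ * C.card ≤
      (((S ×ˢ S).filter fun pq =>
        pq.1.1 < pq.2.1 ∧ pq.1.2.1 < pq.2.2.1 ∧ pq.1.2.2 < pq.2.2.2).card : ℝ) := by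
    have := le_trans h4 h5
    exact_mod_cast this
  have hCcard : (α * n) - (k₁ + k₂) * n ≤ (C.card : ℝ) := by
    have h1' : (S.card : ℝ) ≤ k₁ * n + A.card := by exact_mod_cast h1
    have h2' : (S.card : ℝ) ≤ k₂ * n + B.card := by exact_mod_cast h2
    have h3' : (A.card : ℝ) + B.card ≤ S.card + C.card := by exact_mod_cast h3
    rw [← hcard]
    linarith
  -- numeric bounds on k₁ k₂
  have hc1 : (α - 1) / 2 ≤ (k₁ : ℝ) := Nat.le_ceil _
  have hc2 : (α - 3) / 4 ≤ (k₂ : ℝ) := Nat.le_ceil _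
  have hd1 : (k₁ : ℝ) < (α - 1) / 2 + 1 := Nat.ceil_lt_add_one (by linarith)
  have hd2 : (k₂ : ℝ) < (α - 3) / 4 + 1 := Nat.ceil_lt_add_one (by linarith)
  have hn0 : (0 : ℝ) ≤ n := Nat.cast_nonneg n
  have hk1nn : (0 : ℝ) ≤ k₁ := Nat.cast_nonneg _
  have hk2nn : (0 : ℝ) ≤ k₂ := Nat.cast_nonneg _
  have hgap : (α - 3) / 4 * n ≤ α * n - (k₁ + k₂) * n := by nlinarith
  have hCnn : (0 : ℝ) ≤ (C.card : ℝ) := Nat.cast_nonneg _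
  have hfin : (1 / 64) * (α - 1) * (α - 3) ^ 2 * n ≤ (k₁ : ℝ) * k₂ * C.card := by
    have hstep : (α - 1) / 2 * ((α - 3) / 4) * ((α - 3) / 4 * n) ≤
        (k₁ : ℝ) * k₂ * C.card := by
      have hle : ((α - 3) / 4 * n : ℝ) ≤ C.card := le_trans hgap hCcard
      have hprod : (α - 1) / 2 * ((α - 3) / 4) ≤ (k₁ : ℝ) * k₂ := by
        apply mul_le_mul hc1 hc2 (by linarith) hk1nn
      have hnn1 : (0 : ℝ) ≤ (α - 1) / 2 * ((α - 3) / 4) := by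
        apply mul_nonneg <;> linarith
      have hnn2 : (0 : ℝ) ≤ (α - 3) / 4 * n := by
        apply mul_nonneg (by linarith) hn0
      calc (α - 1) / 2 * ((α - 3) / 4) * ((α - 3) / 4 * n)
          ≤ (k₁ : ℝ) * k₂ * ((α - 3) / 4 * n) := by
            apply mul_le_mul_of_nonneg_right hprod hnn2
        _ ≤ (k₁ : ℝ) * k₂ * C.card := by
            apply mul_le_mul_of_nonneg_left hle (mul_nonneg hk1nn hk2nn)
    have hXnn : (0 : ℝ) ≤ (α - 1) * (α - 3) ^ 2 * n := by
      apply mul_nonneg (mul_nonneg (by linarith) (sq_nonneg _)) hn0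
    nlinarith [hstep, hXnn]
  linarith [hE, hfin]
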